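/- Let (a_1, a_2) and (b_1, b_2) be two orthonormal bases of ℂ², and let c = max over i, j ∈ {1,2} of |⟨a_i, b_j⟩|. Then the lower bound (1/2)(1 − c²) on the average fidelity-based disturbance is tight: there exists a unit vector ψ ∈ ℂ² such that (1/2)[(1 − Σ_{i=1}^{2} |⟨a_i, ψ⟩|⁴) + (1 − Σ_{j=1}^{2} |⟨b_j, ψ⟩|⁴)] = (1/2)(1 − c²). -/

import Mathlib

open Matrix

lemma completeness (a : Fin 2 → (Fin 2 → ℂ))
    (ha : ∀ i j, star (a i) ⬝ᵥ a j = if i = j then (1 : ℂ) else 0) :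
    ∀ k l : Fin 2, ∑ i, a i k * (starRingEnd ℂ) (a i l) = if k = l then (1:ℂ) else 0 := by
  intro k l
  have hA : (Matrix.of fun i k => (starRingEnd ℂ) (a i k)) *
      (Matrix.of fun i k => (starRingEnd ℂ) (a i k))ᴴ = 1 := by
    ext i j
    have := ha i j
    simp [Matrix.mul_apply, Matrix.conjTranspose_apply, dotProduct, Matrix.one_apply] at this ⊢
    convert this using 2 <;> ring_nf <;> simp [mul_comm]
  have hA2 := (mul_eq_one_comm).mp hA
  have := congrFun (congrFun hA2 k) l
  simp [Matrix.mul_apply, Matrix.conjTranspose_apply, Matrix.one_apply] at this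
  rw [Fin.sum_univ_two]
  exact this

lemma parseval (a : Fin 2 → (Fin 2 → ℂ))
    (ha : ∀ i j, star (a i) ⬝ᵥ a j = if i = j then (1 : ℂ) else 0) (u : Fin 2 → ℂ) :
    ((‖star (a 0) ⬝ᵥ u‖)^2 + (‖star (a 1) ⬝ᵥ u‖)^2 : ℂ) = star u ⬝ᵥ u := by
  have hC := completeness a ha
  have h00 := hC 0 0; have h01 := hC 0 1; have h10 := hC 1 0; have h11 := hC 1 1
  simp [Fin.sum_univ_two] at h00 h01 h10 h11
  have habs : ∀ z : ℂ, ((‖z‖)^2 : ℂ) = z * (starRingEnd ℂ) z := by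
    intro z
    rw [Complex.mul_conj, Complex.normSq_eq_norm_sq]
    push_cast; ring
  rw [habs, habs]
  simp only [dotProduct, Fin.sum_univ_two, Pi.star_apply, map_add, _root_.map_mul, RingHomCompTriple.comp_apply,
    Complex.conj_conj]
  simp only [RCLike.star_def]
  simp only [Complex.conj_conj]
  linear_combination ((starRingEnd ℂ) (u 0) * u 0) * h00 + ((starRingEnd ℂ) (u 0) * u 1) * h01 +
    ((starRingEnd ℂ) (u 1) * u 0) * h10 + ((starRingEnd ℂ) (u 1) * u 1) * h11

lemma dot_lin (v : Fin 2 → ℂ) (t γ : ℂ) (u w : Fin 2 → ℂ) :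
    star v ⬝ᵥ (fun k => t * (u k + γ * w k)) = t * ((star v ⬝ᵥ u) + γ * (star v ⬝ᵥ w)) := by
  simp [dotProduct, Fin.sum_univ_two]; ring

lemma dot_conj (u v : Fin 2 → ℂ) : star u ⬝ᵥ v = (starRingEnd ℂ) (star v ⬝ᵥ u) := by
  simp [dotProduct, Fin.sum_univ_two, map_add, _root_.map_mul]; ring

lemma dot_self (t : ℝ) (γ : ℂ) (u w : Fin 2 → ℂ) :
    star (fun k => (t:ℂ) * (u k + γ * w k)) ⬝ᵥ (fun k => (t:ℂ) * (u k + γ * w k))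
    = (t:ℂ)^2 * ((star u ⬝ᵥ u) + γ * (star u ⬝ᵥ w) + (starRingEnd ℂ) γ * (star w ⬝ᵥ u)
        + (starRingEnd ℂ) γ * γ * (star w ⬝ᵥ w)) := by
  simp [dotProduct, Fin.sum_univ_two, map_add, _root_.map_mul, Complex.conj_ofReal]; ring

lemma sum4 (x : Fin 2 → ℝ) (i0 : Fin 2) (p : ℝ) (h1 : x i0 = p) (h2 : x 0 + x 1 = 1) :
    x 0 ^ 2 + x 1 ^ 2 = p ^ 2 + (1 - p) ^ 2 := by
  fin_cases i0 <;> simp at h1 <;> nlinarith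

theorem qubit_disturbance_tradeoff_tight
    (a b : Fin 2 → (Fin 2 → ℂ))
    (ha : ∀ i j, star (a i) ⬝ᵥ a j = if i = j then (1 : ℂ) else 0)
    (hb : ∀ i j, star (b i) ⬝ᵥ b j = if i = j then (1 : ℂ) else 0)
    (c : ℝ)
    (hc : IsGreatest {x : ℝ | ∃ i j, x = ‖star (a i) ⬝ᵥ b j‖} c) :
    ∃ ψ : Fin 2 → ℂ, star ψ ⬝ᵥ ψ = 1 ∧
      (1 / 2) * ((1 - ∑ i, ‖star (a i) ⬝ᵥ ψ‖ ^ 4)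
          + (1 - ∑ j, ‖star (b j) ⬝ᵥ ψ‖ ^ 4))
        = (1 / 2) * (1 - c ^ 2) := by
  obtain ⟨⟨i0, j0, hij⟩, hub⟩ := hc
  -- c is an upper bound on all overlaps
  have hubs : ∀ i j, ‖star (a i) ⬝ᵥ b j‖ ≤ c := fun i j => hub ⟨i, j, rfl⟩
  -- c > 0
  have hcpos : 0 < c := by
    have hP := parseval a ha (b 0)
    rw [hb 0 0] at hP
    simp only [if_pos rfl] at hP
    have hP' : (‖star (a 0) ⬝ᵥ b 0‖)^2 + (‖star (a 1) ⬝ᵥ b 0‖)^2 = 1 := by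
      simp only [if_true, eq_self_iff_true] at hP
      exact_mod_cast hP
    nlinarith [hubs 0 0, hubs 1 0, norm_nonneg (star (a 0) ⬝ᵥ b 0),
      norm_nonneg (star (a 1) ⬝ᵥ b 0)]
  have hcne : (c:ℂ) ≠ 0 := by exact_mod_cast hcpos.ne'
  set g : ℂ := star (a i0) ⬝ᵥ b j0 with hgdef
  have hgg : (starRingEnd ℂ) g * g = (c:ℂ)^2 := by
    rw [mul_comm, Complex.mul_conj, Complex.normSq_eq_norm_sq, ← hij]
    push_cast; ring
  set s : ℝ := Real.sqrt (2 + 2*c) with hsdef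
  have hs2 : s^2 = 2 + 2*c := Real.sq_sqrt (by linarith)
  have hspos : 0 < s := Real.sqrt_pos.mpr (by linarith)
  set γ : ℂ := (starRingEnd ℂ) g / c with hγdef
  have hγconj : (starRingEnd ℂ) γ = g / c := by
    rw [hγdef, map_div₀, Complex.conj_conj, Complex.conj_ofReal]
  have hsne : ((2:ℂ) + 2*c) ≠ 0 := by
    have : ((2:ℝ) + 2*c) ≠ 0 := by positivity
    exact_mod_cast this
  have hinv2 : ((s⁻¹:ℝ):ℂ)^2 = 1 / ((2:ℂ) + 2*c) := by
    have hr : (s⁻¹:ℝ)^2 = 1/(2+2*c) := by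
      rw [inv_pow, hs2]
      simp
    exact_mod_cast hr
  have e1 : γ * g = (c:ℂ) := by
    rw [hγdef]; field_simp; linear_combination hgg
  have e2 : (starRingEnd ℂ) γ * (starRingEnd ℂ) g = (c:ℂ) := by
    rw [hγconj]; field_simp; linear_combination hgg
  have e3 : (starRingEnd ℂ) γ * γ = 1 := by
    rw [hγconj, hγdef]; field_simp; linear_combination hgg
  have h2c : (2:ℝ) + 2*c ≠ 0 := by positivity
  set ψ : Fin 2 → ℂ := fun k => ((s⁻¹ : ℝ) : ℂ) * (a i0 k + γ * b j0 k) with hψdef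
  have hn : star ψ ⬝ᵥ ψ = 1 := by
    rw [hψdef, dot_self, ha i0 i0, hb j0 j0, ← hgdef, dot_conj (b j0) (a i0), ← hgdef]
    simp only [if_true]
    rw [mul_one, e1, e3, e2, hinv2]
    field_simp
    ring_nf
    have h1c : (1 + (c:ℂ)) ≠ 0 := by exact_mod_cast (show (1:ℝ) + c ≠ 0 by positivity)
    linear_combination 2 * mul_inv_cancel₀ h1c
  have hp2 : (s⁻¹*(1+c))^2 = (1+c)/2 := by
    rw [mul_pow, inv_pow, hs2]
    field_simp
  have hAi0 : ‖star (a i0) ⬝ᵥ ψ‖ ^ 2 = (1+c)/2 := by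
    have hv : star (a i0) ⬝ᵥ ψ = (((s⁻¹*(1+c)):ℝ):ℂ) := by
      rw [hψdef]
      rw [dot_lin, ha i0 i0, ← hgdef, e1]
      simp only [if_true]
      push_cast
      ring
    rw [hv, Complex.norm_real, Real.norm_eq_abs, abs_of_nonneg (by positivity), hp2]
  have hBj0 : ‖star (b j0) ⬝ᵥ ψ‖ ^ 2 = (1+c)/2 := by
    have hv : star (b j0) ⬝ᵥ ψ = (((s⁻¹*((1+c)/c)):ℝ):ℂ) * (starRingEnd ℂ) g := by
      rw [hψdef]
      rw [dot_lin, hb j0 j0, dot_conj (b j0) (a i0), ← hgdef, hγdef]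
      simp only [if_true]
      push_cast
      field_simp
      ring
    rw [hv, norm_mul, Complex.norm_real, Real.norm_eq_abs, Complex.norm_conj, ← hij,
      abs_of_nonneg (by positivity)]
    have : s⁻¹ * ((1 + c) / c) * c = s⁻¹ * (1+c) := by field_simp
    rw [this, hp2]
  have hPA : ‖star (a 0) ⬝ᵥ ψ‖ ^ 2 + ‖star (a 1) ⬝ᵥ ψ‖ ^ 2 = 1 := by
    have := parseval a ha ψ
    rw [hn] at this
    exact_mod_cast this
  have hPB : ‖star (b 0) ⬝ᵥ ψ‖ ^ 2 + ‖star (b 1) ⬝ᵥ ψ‖ ^ 2 = 1 := by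
    have := parseval b hb ψ
    rw [hn] at this
    exact_mod_cast this
  have hSA := sum4 (fun i => ‖star (a i) ⬝ᵥ ψ‖ ^ 2) i0 ((1+c)/2) hAi0 hPA
  have hSB := sum4 (fun j => ‖star (b j) ⬝ᵥ ψ‖ ^ 2) j0 ((1+c)/2) hBj0 hPB
  refine ⟨ψ, hn, ?_⟩
  have h4 : ∀ z : ℂ, ‖z‖ ^ 4 = (‖z‖ ^ 2) ^ 2 := fun z => by ring
  simp only [Fin.sum_univ_two, h4]
  rw [hSA, hSB]
  ring
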